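/- Define C₂(x) = (d + b₁c₁)/(c₁ + c₂ + x/μ₂) for x ≥ 0 with parameters δ = 19/31, λ = 4√2 − 1, c₁ = δ/v, c₂ = (1−δ)/v, μ₂ = 2λv², b₁ = (λ+2)v, d = 2(λ+2), v > 0. Then C₂(x) + x ≥ 2v(5√2 + 1) for all x ≥ 0, with equality if and only if x = v(√2 + 2). -/

import Mathlib

theorem stmt_10 (v : ℝ) (hv : 0 < v)
    (δ lam c₁ c₂ μ₂ b₁ d : ℝ)
    (hδ : δ = 19 / 31) (hlam : lam = 4 * Real.sqrt 2 - 1)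
    (hc₁ : c₁ = δ / v) (hc₂ : c₂ = (1 - δ) / v) (hμ₂ : μ₂ = 2 * lam * v ^ 2)
    (hb₁ : b₁ = (lam + 2) * v) (hd : d = 2 * (lam + 2))
    (C₂ : ℝ → ℝ)
    (hC₂ : ∀ x, C₂ x = (d + b₁ * c₁) / (c₁ + c₂ + x / μ₂)) :
    ∀ x : ℝ, 0 ≤ x →
      C₂ x + x ≥ 2 * v * (5 * Real.sqrt 2 + 1) ∧
      (C₂ x + x = 2 * v * (5 * Real.sqrt 2 + 1) ↔ x = v * (Real.sqrt 2 + 2)) := by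
  have hs2 : Real.sqrt 2 ^ 2 = 2 := Real.sq_sqrt (by norm_num)
  have hs1 : 1 < Real.sqrt 2 := by nlinarith [Real.sqrt_nonneg 2]
  set s := Real.sqrt 2 with hsdef
  intro x hx
  have hL : 0 < x + 2 * (4 * s - 1) * v := by nlinarith
  have h4 : (4 * s - 1) ≠ 0 := by nlinarith
  have hden0 : c₁ + c₂ + x / μ₂ = (x + 2 * (4 * s - 1) * v) / (2 * (4 * s - 1) * v ^ 2) := by
    subst hc₁ hc₂ hμ₂ hlam hδ
    field_simp
    ring
  have hnum : d + b₁ * c₁ = (4 * s + 1) * (81 / 31) := by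
    subst hd hb₁ hc₁ hlam hδ
    field_simp
    ring
  have hC : C₂ x = 162 * v ^ 2 / (x + 2 * (4 * s - 1) * v) := by
    rw [hC₂, hden0, hnum, div_div_eq_mul_div]
    rw [div_eq_div_iff hL.ne' hL.ne']
    linear_combination ((2592 / 31) * v ^ 2 * (x + 2 * (4 * s - 1) * v)) * hs2
  have key : C₂ x + x - 2 * v * (5 * s + 1) =
      (x - v * (s + 2)) ^ 2 / (x + 2 * (4 * s - 1) * v) := by
    rw [hC]
    rw [div_add' _ _ _ hL.ne', div_sub' hL.ne', div_eq_div_iff hL.ne' hL.ne']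
    linear_combination (-81 * v ^ 2 * (x + 2 * (4 * s - 1) * v)) * hs2
  constructor
  · have : 0 ≤ (x - v * (s + 2)) ^ 2 / (x + 2 * (4 * s - 1) * v) :=
      div_nonneg (sq_nonneg _) hL.le
    linarith [key]
  · constructor
    · intro h
      have h0 : (x - v * (s + 2)) ^ 2 / (x + 2 * (4 * s - 1) * v) = 0 := by
        rw [← key]; linarith
      have := (div_eq_zero_iff.mp h0).resolve_right hL.ne'
      have := pow_eq_zero_iff (n := 2) (by norm_num) |>.mp this
      linarith
    · intro h
      rw [hC, h]
      rw [div_add' _ _ _ (by rw [h] at hL; exact hL.ne'), div_eq_iff (by rw [h] at hL; exact hL.ne')]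
      linear_combination (-81 * v ^ 2) * hs2
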